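/- The $9 \times 9$ matrix $Z_{CHSH}$ with $(Z_{CHSH})_{00} = 2 + \sqrt{2}$, $(Z_{CHSH})_{0i} = (Z_{CHSH})_{i0} = -1$ for $i = 1, \ldots, 8$, $(Z_{CHSH})_{ii} = 1$, $(Z_{CHSH})_{i,i\pm 1 \bmod 8} = 2 - \sqrt{2}$ and $(Z_{CHSH})_{i, i+4 \bmod 8} = 3 - 2\sqrt{2}$ (indices $1, \ldots, 8$ taken cyclically), and all other entries $0$, is positive semidefinite. -/

import Mathlib

/-- The dual-optimal CHSH matrix `Z_CHSH`: top-left entry `2+√2`, border entries `-1`,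
and on the trailing `8×8` block (indexed by `ZMod 8`) the circulant with diagonal `1`,
value `2-√2` at offsets `±1` and `3-2√2` at offset `4`. -/
noncomputable def Zchsh : Matrix (Fin 1 ⊕ ZMod 8) (Fin 1 ⊕ ZMod 8) ℝ :=
  Matrix.fromBlocks
    (fun _ _ => 2 + Real.sqrt 2) (fun _ _ => -1) (fun _ _ => -1)
    (fun i j =>
      if i = j then 1
      else if i - j = 1 ∨ i - j = -1 then 2 - Real.sqrt 2
      else if i - j = 4 then 3 - 2 * Real.sqrt 2
      else 0)

open Matrix

lemma zchsh_sum8 (f : ZMod 8 → ℝ) :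
    ∑ i, f i = f 0 + f 1 + f 2 + f 3 + f 4 + f 5 + f 6 + f 7 := by
  show ∑ i : Fin 8, f i = _
  exact Fin.sum_univ_eight f

/-- `Z_CHSH` is positive semidefinite. -/
theorem Zchsh_posSemidef : Zchsh.PosSemidef := by
  rw [Matrix.posSemidef_iff_dotProduct_mulVec]
  constructor
  · have hd : ∀ i j : ZMod 8, (i - j = 4) = (j - i = 4) := by decide
    have ho : ∀ i j : ZMod 8, (i - j = 1 ∨ i - j = -1) = (j - i = 1 ∨ j - i = -1) := by decide
    have he : ∀ i j : ZMod 8, (i = j) = (j = i) := by decide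
    ext i j
    rcases i with i | i <;> rcases j with j | j <;>
      simp only [Matrix.conjTranspose_apply, Zchsh, Matrix.fromBlocks, Matrix.of_apply,
        Sum.elim_inl, Sum.elim_inr, star_trivial]
    exact if_congr (iff_of_eq (he j i)) rfl
      (if_congr (iff_of_eq (ho j i)) rfl (if_congr (iff_of_eq (hd j i)) rfl rfl))
  · intro x
    simp only [dotProduct, Matrix.mulVec, star, Fintype.sum_sum_type, Fin.sum_univ_one,
      zchsh_sum8, id, Zchsh, Matrix.fromBlocks, Sum.elim_inl, Sum.elim_inr, Matrix.of_apply]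
    norm_num
    simp (config := { decide := true }) only [if_true, if_false]
    have hs : Real.sqrt 2 ^ 2 = 2 := Real.sq_sqrt (by norm_num)
    have h1 : (1:ℝ) ≤ Real.sqrt 2 := by nlinarith [Real.sqrt_nonneg 2]
    have h2 : Real.sqrt 2 ≤ 2 := by nlinarith [Real.sqrt_nonneg 2]
    set s := Real.sqrt 2 with hsdef
    set a := x (Sum.inl 0) with ha
    set y0 := x (Sum.inr 0) with hy0
    set y1 := x (Sum.inr 1) with hy1
    set y2 := x (Sum.inr 2) with hy2
    set y3 := x (Sum.inr 3) with hy3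
    set y4 := x (Sum.inr 4) with hy4
    set y5 := x (Sum.inr 5) with hy5
    set y6 := x (Sum.inr 6) with hy6
    set y7 := x (Sum.inr 7) with hy7
    have key : (2+s)*a^2 - 2*a*(y0+y1+y2+y3+y4+y5+y6+y7)
        + (y0^2+y1^2+y2^2+y3^2+y4^2+y5^2+y6^2+y7^2)
        + 2*(2-s)*(y0*y1+y1*y2+y2*y3+y3*y4+y4*y5+y5*y6+y6*y7+y7*y0)
        + 2*(3-2*s)*(y0*y4+y1*y5+y2*y6+y3*y7)
        = (2-s)/2*(y0+y1+y2+y3+y4+y5+y6+y7-(2+s)*a)^2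
        + (4-2*s)/4*((y0-y2+y4-y6)^2+(y1-y3+y5-y7)^2)
        + (s-1)/4*((2*(y0-y4)+s*(y1-y3-y5+y7))^2+(2*(y2-y6)+s*(y1+y3-y5-y7))^2) := by
      linear_combination (1/2*y7^2 - y6*y7 - y5*y6 + 1/2*y5^2 + y4*y7 - y4*y5 - y3*y7 + y3*y6
        - y3*y4 + 1/2*y3^2 + y2*y7 + y2*y5 - y2*y3 + y1*y6 - y1*y5 + y1*y4 - y1*y2 + 1/2*y1^2
        - y0*y7 + y0*y5 + y0*y3 - y0*y1 - 1/2*s*y7^2 - 1/2*s*y5^2 + s*y3*y7 - 1/2*s*y3^2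
        + s*y1*y5 - 1/2*s*y1^2 - a*(y0+y1+y2+y3+y4+y5+y6+y7) + a^2 + 1/2*a^2*s) * hs
    have hA : 0 ≤ (2-s)/2*(y0+y1+y2+y3+y4+y5+y6+y7-(2+s)*a)^2 :=
      mul_nonneg (by linarith) (sq_nonneg _)
    have hB : 0 ≤ (4-2*s)/4*((y0-y2+y4-y6)^2+(y1-y3+y5-y7)^2) :=
      mul_nonneg (by linarith) (by positivity)
    have hC : 0 ≤ (s-1)/4*((2*(y0-y4)+s*(y1-y3-y5+y7))^2+(2*(y2-y6)+s*(y1+y3-y5-y7))^2) :=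
      mul_nonneg (by linarith) (by positivity)
    linarith [key, hA, hB, hC]
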